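/- For every k ≥ 1, the number of maximal locations of the word w_k is |L| = k(3k³ + 2k² − 9k + 16)/12. -/

import Mathlib

/-- The fingerprint `C_s(i,j)`: the set of distinct letters occurring in `s_i … s_j`. -/
def fingerprint {α : Type*} [DecidableEq α] (s : ℕ → α) (i j : ℕ) : Finset α :=
  (Finset.Icc i j).image s

/-- `⟨i,j⟩` is a maximal location of the sequence `s_1 … s_n`. -/
def IsMaxLoc {α : Type*} [DecidableEq α] (s : ℕ → α) (n i j : ℕ) : Prop :=
  1 ≤ i ∧ i ≤ j ∧ j ≤ n ∧
    (1 < i → s (i - 1) ∉ fingerprint s i j) ∧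
    (j < n → s (j + 1) ∉ fingerprint s i j)

/-- The word `w_k` over the alphabet `{1,…,k}` (letter `a_i` encoded as `i`),
defined by `w_1 = a_1` and `w_k = w_{k−1}·(a_1 a_2 … a_k)^k` for `k > 1`. -/
def w : ℕ → List ℕ
  | 0 => []
  | k + 1 => w k ++ (List.replicate (k + 1) (List.range' 1 (k + 1))).flatten

/-- The word `w_k` viewed as a 1-indexed sequence `s_1 … s_n` with `n = |w_k|`. -/
def wSeq (k : ℕ) : ℕ → ℕ := fun p => (w k).getD (p - 1) 0

/-- cumulative block lengths -/
def Nn : ℕ → ℕ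
  | 0 => 0
  | j + 1 => Nn j + (j + 1) ^ 2

lemma Nn_mono : Monotone Nn := by
  apply monotone_nat_of_le_succ
  intro j; simp [Nn]

lemma Nn_lt {a b : ℕ} (h : a < b) : Nn a < Nn b := by
  have h1 : 1 ≤ (a+1)^2 := Nat.one_le_pow _ _ (by omega)
  have : Nn (a+1) ≤ Nn b := Nn_mono h
  have h2 : Nn (a+1) = Nn a + (a+1)^2 := rfl
  omega

lemma le_Nn (j : ℕ) : j ≤ Nn j := by
  induction j with
  | zero => simp
  | succ j ih => have : 1 ≤ (j+1)^2 := Nat.one_le_pow _ _ (by omega)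
                 simp only [Nn]; omega

lemma Nn_eq (J : ℕ) (h : 1 ≤ J) : Nn J = Nn (J - 1) + J ^ 2 := by
  obtain ⟨j, rfl⟩ := Nat.exists_eq_add_of_le h
  simp [Nn, Nat.add_comm 1 j]

lemma w_length (k : ℕ) : (w k).length = Nn k := by
  induction k with
  | zero => simp [w, Nn]
  | succ k ih =>
    simp only [w, Nn, List.length_append, ih, List.length_flatten, List.map_replicate,
      List.length_range', List.sum_replicate, smul_eq_mul]
    ring

lemma flat_getD (m : ℕ) : ∀ c r, r < c * m →
    ((List.replicate c (List.range' 1 m)).flatten).getD r 0 = r % m + 1 := by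
  intro c
  induction c with
  | zero => intro r h; omega
  | succ c ih =>
    intro r h
    rw [List.replicate_succ, List.flatten_cons]
    rcases lt_or_ge r m with hr | hr
    · rw [List.getD_append _ _ _ _ (by simpa using hr),
        List.getD_eq_getElem _ _ (by simpa using hr), List.getElem_range',
        Nat.mod_eq_of_lt hr]
      omega
    · rw [List.getD_append_right _ _ _ _ (by simpa using hr), List.length_range']
      have hcm : c * m + m = (c+1) * m := by ring
      rw [ih (r - m) (by omega)]
      congr 1
      conv_rhs => rw [show r = m + (r - m) by omega]
      rw [Nat.add_mod_left]

lemma w_getD : ∀ k J q, 1 ≤ J → J ≤ k → Nn (J - 1) ≤ q → q < Nn J →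
    (w k).getD q 0 = (q - Nn (J - 1)) % J + 1 := by
  intro k
  induction k with
  | zero => intro J q h1 h2; omega
  | succ k ih =>
    intro J q h1 h2 hq1 hq2
    rcases lt_or_ge q (Nn k) with hlt | hge
    · rw [w, List.getD_append _ _ _ _ (by rw [w_length]; exact hlt)]
      rcases Nat.lt_or_ge k J with hJ | hJ
      · -- J = k+1, so Nn (J-1) = Nn k ≤ q < Nn k, contradiction
        have : J = k + 1 := by omega
        subst this
        simp only [Nat.add_sub_cancel] at hq1
        omega
      · exact ih J q h1 hJ hq1 hq2
    · have hJ : J = k + 1 := by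
        by_contra hne
        have : J ≤ k := by omega
        have := Nn_mono this
        omega
      subst hJ
      simp only [Nat.add_sub_cancel] at hq1 ⊢
      rw [w, List.getD_append_right _ _ _ _ (by rw [w_length]; exact hge), w_length]
      have hq2' : q - Nn k < (k+1) * (k+1) := by
        have : Nn (k+1) = Nn k + (k+1)^2 := rfl
        have h2 : (k+1)^2 = (k+1)*(k+1) := sq (k+1)
        omega
      exact flat_getD (k+1) (k+1) (q - Nn k) hq2'

lemma wSeq_eq (k J o : ℕ) (h1 : 1 ≤ J) (h2 : J ≤ k) (h3 : 1 ≤ o) (h4 : o ≤ J ^ 2) :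
    wSeq k (Nn (J - 1) + o) = (o - 1) % J + 1 := by
  have := w_getD k J (Nn (J - 1) + o - 1) h1 h2 (by omega)
    (by rw [Nn_eq J h1]; omega)
  rw [wSeq, this]
  congr 2
  omega

/-- positions at the start of block J (the `r`-th letter of the first cycle) carry letter r -/
lemma s_small (k J r : ℕ) (h1 : 1 ≤ r) (h2 : r ≤ J) (h3 : J ≤ k) :
    wSeq k (Nn (J - 1) + r) = r := by
  have hJ : 1 ≤ J := le_trans h1 h2
  rw [wSeq_eq k J r hJ h3 h1 (by nlinarith)]
  rw [Nat.mod_eq_of_lt (by omega)]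
  omega

/-- positions at the end of block J carry letter J - d -/
lemma s_tail (k J d : ℕ) (h1 : 1 ≤ J) (h2 : d < J) (h3 : J ≤ k) :
    wSeq k (Nn J - d) = J - d := by
  have hsq : J ^ 2 = J * J := sq J
  have hJ2 : J ≤ J ^ 2 := by nlinarith
  have hNJ : Nn J = Nn (J - 1) + J ^ 2 := Nn_eq J h1
  have hpos : Nn J - d = Nn (J - 1) + (J ^ 2 - d) := by omega
  rw [hpos, wSeq_eq k J (J ^ 2 - d) h1 h3 (by omega) (by omega)]
  have hmul : J * (J - 1) + J = J * J := by
    rcases Nat.exists_eq_add_of_le h1 with ⟨j, rfl⟩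
    simp only [Nat.add_sub_cancel_left]
    ring
  have : J ^ 2 - d - 1 = J * (J - 1) + (J - 1 - d) := by omega
  rw [this, Nat.mul_add_mod, Nat.mod_eq_of_lt (by omega)]
  omega

lemma s_period (k J q : ℕ) (h0 : 1 ≤ J) (h1 : Nn (J - 1) < q) (h2 : q + J ≤ Nn J) (h3 : J ≤ k) :
    wSeq k (q + J) = wSeq k q := by
  have hNJ : Nn J = Nn (J - 1) + J ^ 2 := Nn_eq J h0
  have e1 : q = Nn (J-1) + (q - Nn (J-1)) := by omega
  have e2 : q + J = Nn (J-1) + (q - Nn (J-1) + J) := by omega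
  rw [e2, wSeq_eq k J _ h0 h3 (by omega) (by omega)]
  conv_rhs => rw [e1]
  rw [wSeq_eq k J _ h0 h3 (by omega) (by omega)]
  congr 1
  have : q - Nn (J-1) + J - 1 = (q - Nn (J-1) - 1) + J := by omega
  rw [this, Nat.add_mod_right]

lemma s_inj (k J p q : ℕ) (h0 : 1 ≤ J) (h1 : Nn (J - 1) < p) (h2 : p ≤ q) (h3 : q ≤ Nn J)
    (h4 : q - p < J) (h5 : J ≤ k) (h6 : wSeq k p = wSeq k q) : p = q := by
  have hNJ : Nn J = Nn (J - 1) + J ^ 2 := Nn_eq J h0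
  have e1 : p = Nn (J-1) + (p - Nn (J-1)) := by omega
  have e2 : q = Nn (J-1) + (q - Nn (J-1)) := by omega
  rw [e1, wSeq_eq k J _ h0 h5 (by omega) (by omega)] at h6
  rw [e2, wSeq_eq k J _ h0 h5 (by omega) (by omega)] at h6
  set a := p - Nn (J-1) - 1 with ha
  set b := q - Nn (J-1) - 1 with hb
  have hab : a ≤ b := by omega
  have hlt : b - a < J := by omega
  have hmod : a % J = b % J := by omega
  have : a ≡ b [MOD J] := hmod
  have hdvd : J ∣ b - a := (Nat.modEq_iff_dvd' hab).mp this
  have : b - a = 0 := by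
    rcases Nat.eq_zero_or_pos (b - a) with h | h
    · exact h
    · exact absurd (Nat.le_of_dvd h hdvd) (by omega)
  omega

lemma s_range (k J p : ℕ) (h0 : 1 ≤ J) (h1 : Nn (J - 1) < p) (h2 : p ≤ Nn J) (h3 : J ≤ k) :
    1 ≤ wSeq k p ∧ wSeq k p ≤ J := by
  have hNJ : Nn J = Nn (J - 1) + J ^ 2 := Nn_eq J h0
  have e1 : p = Nn (J-1) + (p - Nn (J-1)) := by omega
  rw [e1, wSeq_eq k J _ h0 h3 (by omega) (by omega)]
  have := Nat.mod_lt (p - Nn (J-1) - 1) (show 0 < J by omega)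
  omega

/-- every position belongs to a block -/
lemma block_exists : ∀ k p, 1 ≤ p → p ≤ Nn k → ∃ J, 1 ≤ J ∧ J ≤ k ∧ Nn (J - 1) < p ∧ p ≤ Nn J := by
  intro k
  induction k with
  | zero => intro p h1 h2; simp [Nn] at h2; omega
  | succ k ih =>
    intro p h1 h2
    rcases le_or_gt p (Nn k) with h | h
    · obtain ⟨J, hJ⟩ := ih p h1 h
      exact ⟨J, hJ.1, by omega, hJ.2.2⟩
    · exact ⟨k + 1, by omega, le_refl _, by simpa using h, h2⟩

lemma s_all_le (k J p : ℕ) (h1 : 1 ≤ p) (h2 : p ≤ Nn J) (h3 : J ≤ k) : wSeq k p ≤ J := by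
  obtain ⟨J', hJ1, hJ2, hJ3, hJ4⟩ := block_exists J p h1 h2
  have := (s_range k J' p hJ1 hJ3 hJ4 (le_trans hJ2 h3)).2
  omega

lemma mem_fingerprint {s : ℕ → ℕ} {i j x : ℕ} :
    x ∈ fingerprint s i j ↔ ∃ p, i ≤ p ∧ p ≤ j ∧ s p = x := by
  simp [fingerprint, Finset.mem_image, Finset.mem_Icc]
  constructor
  · rintro ⟨p, ⟨h1, h2⟩, h3⟩; exact ⟨p, h1, h2, h3⟩
  · rintro ⟨p, h1, h2, h3⟩; exact ⟨p, ⟨h1, h2⟩, h3⟩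

def Bo (J o : ℕ) : ℕ := if o = 1 then J - 2 else J - 1

lemma sq_ge (J : ℕ) : J ≤ J ^ 2 := by nlinarith

lemma max_S1a (k J : ℕ) (h1 : 1 ≤ J) (h2 : J ≤ k - 1) (hk : 1 ≤ k) :
    IsMaxLoc (wSeq k) (Nn k) 1 (Nn J + J) := by
  have hJk : J + 1 ≤ k := by omega
  have hN1 : Nn (J + 1) = Nn J + (J + 1) ^ 2 := rfl
  have hsq : J + 1 ≤ (J + 1) ^ 2 := sq_ge (J + 1)
  have hNk : Nn (J + 1) ≤ Nn k := Nn_mono hJk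
  refine ⟨le_refl 1, by omega, by omega, by omega, ?_⟩
  intro hlt hmem
  rw [mem_fingerprint] at hmem
  obtain ⟨p, hp1, hp2, hp3⟩ := hmem
  have hse : wSeq k (Nn J + J + 1) = J + 1 := by
    have := s_small k (J + 1) (J + 1) (by omega) (le_refl _) hJk
    simpa [Nat.add_assoc] using this
  rw [hse] at hp3
  rcases le_or_gt p (Nn J) with h | h
  · have := s_all_le k J p hp1 h (by omega)
    omega
  · -- p = Nn J + r with 1 ≤ r ≤ J
    have hr : wSeq k p = p - Nn J := by
      have := s_small k (J + 1) (p - Nn J) (by omega) (by omega) hJk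
      simp only [Nat.add_sub_cancel] at this
      rw [show Nn J + (p - Nn J) = p by omega] at this
      exact this
    omega

lemma max_S1b (k : ℕ) (hk : 1 ≤ k) : IsMaxLoc (wSeq k) (Nn k) 1 (Nn k) := by
  have : 1 ≤ Nn k := le_trans hk (le_Nn k)
  exact ⟨le_refl 1, this, le_refl _, by omega, by omega⟩

lemma max_S3 (k J o e : ℕ) (hJ2 : 2 ≤ J) (hJk : J ≤ k) (ho1 : 1 ≤ o) (ho2 : o ≤ J ^ 2)
    (hie : Nn (J - 1) + o ≤ e) (heN : e ≤ Nn k) (heB : e ≤ Nn (J - 1) + o + Bo J o - 1) :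
    IsMaxLoc (wSeq k) (Nn k) (Nn (J - 1) + o) e := by
  set i := Nn (J - 1) + o with hi
  have hNJ : Nn J = Nn (J - 1) + J ^ 2 := Nn_eq J (by omega)
  have hNJk : Nn J ≤ Nn k := Nn_mono hJk
  have hsq : J ≤ J ^ 2 := sq_ge J
  have hBo1 : 1 ≤ Bo J o := by
    rcases Nat.eq_zero_or_pos (Bo J o) with h | h
    · omega
    · exact h
  have hBoJ : Bo J o ≤ J - 1 := by unfold Bo; split <;> omega
  have hJ3 : o = 1 → 3 ≤ J := by
    intro h; rw [h] at hBo1; unfold Bo at hBo1; simp at hBo1; omega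
  refine ⟨by omega, hie, heN, ?_, ?_⟩
  · -- left maximality
    intro h1i hmem
    rw [mem_fingerprint] at hmem
    obtain ⟨p, hp1, hp2, hp3⟩ := hmem
    rcases Nat.eq_or_lt_of_le ho1 with ho | ho
    · -- o = 1 : block start, J ≥ 3, letters are offsets ≤ J-2, s(i-1) = J-1
      have hoe : o = 1 := ho.symm
      have hJ3' := hJ3 hoe
      have hBoe : Bo J o = J - 2 := by unfold Bo; simp [hoe]
      have hi1 : wSeq k (i - 1) = J - 1 := by
        have := s_tail k (J - 1) 0 (by omega) (by omega) (by omega)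
        simp only [Nat.sub_zero] at this
        rw [show i - 1 = Nn (J - 1) by omega]
        omega
      have hsp : wSeq k p = p - Nn (J - 1) := by
        have := s_small k J (p - Nn (J - 1)) (by omega) (by omega) hJk
        rw [show Nn (J - 1) + (p - Nn (J - 1)) = p by omega] at this
        exact this
      omega
    · -- o ≥ 2
      have hBoe : Bo J o = J - 1 := by unfold Bo; split <;> omega
      rcases le_or_gt p (Nn J) with hpN | hpN
      · -- both i-1, p in block J, distance < J
        have := s_inj k J (i - 1) p (by omega) (by omega) (by omega) (by omega) (by omega) hJk hp3.symm
        omega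
      · -- p beyond block J; s p = p - Nn J small, s(i-1) large
        have hJk' : J + 1 ≤ k := by
          have : Nn J < Nn k := by omega
          by_contra hc
          have : k ≤ J := by omega
          have := Nn_mono this
          omega
        have hsp : wSeq k p = p - Nn J := by
          have := s_small k (J + 1) (p - Nn J) (by omega) (by omega) hJk'
          simp only [Nat.add_sub_cancel] at this
          rw [show Nn J + (p - Nn J) = p by omega] at this
          exact this
        have hi1 : wSeq k (i - 1) = J - (Nn J - (i - 1)) := by
          have := s_tail k J (Nn J - (i - 1)) (by omega) (by omega) hJk
          rw [show Nn J - (Nn J - (i - 1)) = i - 1 by omega] at this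
          exact this
      -- s(i-1) = J - NnJ + i - 1 ;  s p = p - Nn J ≤ e - Nn J ≤ i + J - 2 - Nn J = s(i-1) - 1
        omega
  · -- right maximality
    intro heN' hmem
    rw [mem_fingerprint] at hmem
    obtain ⟨p, hp1, hp2, hp3⟩ := hmem
    rcases le_or_gt (e + 1) (Nn J) with heJ | heJ
    · have := s_inj k J p (e + 1) (by omega) (by omega) (by omega) (by omega) (by omega) hJk hp3
      omega
    · -- e + 1 > Nn J : crossing
      have hJk' : J + 1 ≤ k := by
        have : Nn J < Nn k := by omega
        by_contra hc
        have : k ≤ J := by omega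
        have := Nn_mono this
        omega
      have hse : wSeq k (e + 1) = e + 1 - Nn J := by
        have := s_small k (J + 1) (e + 1 - Nn J) (by omega) (by omega) hJk'
        simp only [Nat.add_sub_cancel] at this
        rw [show Nn J + (e + 1 - Nn J) = e + 1 by omega] at this
        exact this
      rcases le_or_gt p (Nn J) with hpN | hpN
      · have hsp : wSeq k p = J - (Nn J - p) := by
          have := s_tail k J (Nn J - p) (by omega) (by omega) hJk
          rw [show Nn J - (Nn J - p) = p by omega] at this
          exact this
        omega
      · have hsp : wSeq k p = p - Nn J := by
          have := s_small k (J + 1) (p - Nn J) (by omega) (by omega) hJk'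
          simp only [Nat.add_sub_cancel] at this
          rw [show Nn J + (p - Nn J) = p by omega] at this
          exact this
        omega

lemma max_conv (k i e : ℕ) (hk : 1 ≤ k) (h : IsMaxLoc (wSeq k) (Nn k) i e) :
    (i = 1 ∧ (e = Nn k ∨ ∃ J, 1 ≤ J ∧ J ≤ k - 1 ∧ e = Nn J + J)) ∨
    (∃ J o, 2 ≤ J ∧ J ≤ k ∧ 1 ≤ o ∧ o ≤ J ^ 2 ∧ i = Nn (J - 1) + o ∧ i ≤ e ∧ e ≤ Nn k ∧
      e ≤ Nn (J - 1) + o + Bo J o - 1) := by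
  obtain ⟨h1, h2, h3, hL, hR⟩ := h
  rcases Nat.eq_or_lt_of_le h1 with hi1 | hi2
  · -- i = 1
    left
    refine ⟨hi1.symm, ?_⟩
    rcases Nat.eq_or_lt_of_le h3 with heq | hlt
    · exact Or.inl heq
    · right
      obtain ⟨E, hE1, hE2, hE3, hE4⟩ := block_exists k e (by omega) h3
      have hNE : Nn E = Nn (E - 1) + E ^ 2 := Nn_eq E hE1
      have hsqE : E ≤ E ^ 2 := sq_ge E
      set o := e - Nn (E - 1) with ho
      have ho1 : 1 ≤ o := by omega
      have ho2 : o ≤ E ^ 2 := by omega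
      have hoE : o ≤ E - 1 := by
        by_contra hc
        push_neg at hc
        -- o ≥ E: the window contains letters 1..E
        apply hR hlt
        rw [mem_fingerprint]
        rcases le_or_gt (e + 1) (Nn E) with he1 | he1
        · -- s (e+1) ∈ [1, E]
          obtain ⟨hv1, hv2⟩ := s_range k E (e + 1) hE1 (by omega) (by omega) (by omega)
          refine ⟨Nn (E - 1) + wSeq k (e + 1), by omega, by omega, ?_⟩
          exact s_small k E (wSeq k (e + 1)) hv1 hv2 (by omega)
        · -- e = Nn E, s(e+1) = 1
          have he : e = Nn E := by omega
          have hEk : E < k := by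
            have h5 : Nn E < Nn k := by omega
            by_contra hc
            have := Nn_mono (show k ≤ E by omega)
            omega
          have hs1 : wSeq k (e + 1) = 1 := by
            have := s_small k (E + 1) 1 (by omega) (by omega) (by omega)
            simp only [Nat.add_sub_cancel] at this
            rw [he]
            simpa using this
          refine ⟨Nn (E - 1) + 1, by omega, by omega, ?_⟩
          rw [hs1]
          exact s_small k E 1 (by omega) (by omega) (by omega)
      have hE2' : 2 ≤ E := by omega
      -- s(e+1) = o + 1
      have hse : wSeq k (e + 1) = o + 1 := by
        have := s_small k E (o + 1) (by omega) (by omega) (by omega)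
        rw [show Nn (E - 1) + (o + 1) = e + 1 by omega] at this
        exact this
      have hoE1 : o = E - 1 := by
        by_contra hc
        have hoE2 : o + 1 ≤ E - 1 := by omega
        apply hR hlt
        rw [mem_fingerprint, hse]
        have hNE1 : Nn (E - 1) = Nn (E - 2) + (E - 1) ^ 2 := by
          have := Nn_eq (E - 1) (by omega)
          rw [show E - 1 - 1 = E - 2 by omega] at this
          exact this
        have hsq1 : E - 1 ≤ (E - 1) ^ 2 := sq_ge (E - 1)
        refine ⟨Nn (E - 2) + (o + 1), by omega, by omega, ?_⟩
        have := s_small k (E - 1) (o + 1) (by omega) (by omega) (by omega)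
        rw [show E - 1 - 1 = E - 2 by omega] at this
        exact this
      exact ⟨E - 1, by omega, by omega, by omega⟩
  · -- i ≥ 2
    right
    obtain ⟨J, hJ1, hJk, hJ3, hJ4⟩ := block_exists k i (by omega) (le_trans h2 h3)
    have hNJ : Nn J = Nn (J - 1) + J ^ 2 := Nn_eq J hJ1
    have hsq : J ≤ J ^ 2 := sq_ge J
    set o := i - Nn (J - 1) with ho
    have ho1 : 1 ≤ o := by omega
    have ho2 : o ≤ J ^ 2 := by omega
    have hJ2 : 2 ≤ J := by
      by_contra hc
      have : J = 1 := by omega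
      subst this
      simp [Nn] at hJ4
      omega
    refine ⟨J, o, hJ2, hJk, ho1, ho2, by omega, h2, h3, ?_⟩
    by_contra hc
    push_neg at hc
    have hBoJ : Bo J o ≤ J - 1 := by unfold Bo; split <;> omega
    have heB : Nn (J - 1) + o + Bo J o ≤ e := by omega
    apply hL hi2
    rw [mem_fingerprint]
    rcases Nat.eq_or_lt_of_le ho1 with hoe | hoge
    · -- o = 1 (block start)
      have hoe : o = 1 := hoe.symm
      rcases Nat.eq_or_lt_of_le hJ2 with hJe | hJ3'
      · -- J = 2, i = 2 : s 1 = 1 = s 2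
        have hJe : J = 2 := hJe.symm
        have hi2' : i = 2 := by
          rw [hJe] at ho hNJ
          simp [Nn] at *
          omega
        have hs1 : wSeq k (i - 1) = 1 := by
          have := s_small k 1 1 (le_refl _) (le_refl _) hk
          simp [Nn] at this
          rw [hi2']
          simpa using this
        have hs2 : wSeq k 2 = 1 := by
          have := s_small k 2 1 (by omega) (by omega) (by omega)
          simp [Nn] at this
          simpa using this
        exact ⟨2, by omega, by omega, by rw [hs2, hs1]⟩
      · -- J ≥ 3
        have hBoe : Bo J o = J - 2 := by unfold Bo; simp [hoe]
        have hi1 : wSeq k (i - 1) = J - 1 := by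
          have := s_tail k (J - 1) 0 (by omega) (by omega) (by omega)
          simp only [Nat.sub_zero] at this
          rw [show i - 1 = Nn (J - 1) by omega]
          omega
        refine ⟨Nn (J - 1) + (J - 1), by omega, by omega, ?_⟩
        rw [hi1]
        exact s_small k J (J - 1) (by omega) (by omega) hJk
    · -- o ≥ 2
      have hBoe : Bo J o = J - 1 := by unfold Bo; split <;> omega
      rcases le_or_gt (i - 1 + J) (Nn J) with hpN | hpN
      · refine ⟨i - 1 + J, by omega, by omega, ?_⟩
        exact s_period k J (i - 1) (by omega) (by omega) (by omega) hJk
      · have hJk' : J + 1 ≤ k := by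
          have : Nn J < Nn k := by
            have : Nn J < i - 1 + J := hpN
            omega
          by_contra hc2
          have := Nn_mono (show k ≤ J by omega)
          omega
        have hi1 : wSeq k (i - 1) = J - (Nn J - (i - 1)) := by
          have := s_tail k J (Nn J - (i - 1)) (by omega) (by omega) hJk
          rw [show Nn J - (Nn J - (i - 1)) = i - 1 by omega] at this
          exact this
        have hsp : wSeq k (i - 1 + J) = i - 1 + J - Nn J := by
          have := s_small k (J + 1) (i - 1 + J - Nn J) (by omega) (by omega) hJk'
          simp only [Nat.add_sub_cancel] at this
          rw [show Nn J + (i - 1 + J - Nn J) = i - 1 + J by omega] at this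
          exact this
        refine ⟨i - 1 + J, by omega, by omega, ?_⟩
        rw [hsp, hi1]
        omega

def S1 (k : ℕ) : Finset (ℕ × ℕ) :=
  insert (1, Nn k) ((Finset.Icc 1 (k - 1)).image fun J => (1, Nn J + J))

def S3 (k : ℕ) : Finset (ℕ × ℕ) :=
  (Finset.Icc 2 k).biUnion fun J =>
    (Finset.Icc 1 (J ^ 2)).biUnion fun o =>
      (Finset.Icc (Nn (J - 1) + o) (min (Nn k) (Nn (J - 1) + o + Bo J o - 1))).image
        fun e => (Nn (J - 1) + o, e)

lemma mem_S3 (k : ℕ) (p : ℕ × ℕ) : p ∈ S3 k ↔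
    ∃ J o, 2 ≤ J ∧ J ≤ k ∧ 1 ≤ o ∧ o ≤ J ^ 2 ∧ p.1 = Nn (J - 1) + o ∧
      p.1 ≤ p.2 ∧ p.2 ≤ Nn k ∧ p.2 ≤ Nn (J - 1) + o + Bo J o - 1 := by
  simp only [S3, Finset.mem_biUnion, Finset.mem_Icc, Finset.mem_image]
  constructor
  · rintro ⟨J, ⟨hJ1, hJ2⟩, o, ⟨ho1, ho2⟩, e, ⟨he1, he2⟩, rfl⟩
    exact ⟨J, o, hJ1, hJ2, ho1, ho2, rfl, he1, by omega, by omega⟩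
  · rintro ⟨J, o, hJ1, hJ2, ho1, ho2, hp1, hp2, hp3, hp4⟩
    refine ⟨J, ⟨hJ1, hJ2⟩, o, ⟨ho1, ho2⟩, p.2, ⟨by omega, by omega⟩, ?_⟩
    rw [← hp1]

lemma setEq (k : ℕ) (hk : 1 ≤ k) :
    {p : ℕ × ℕ | IsMaxLoc (wSeq k) (Nn k) p.1 p.2} = ↑(S1 k ∪ S3 k) := by
  ext ⟨i, e⟩
  simp only [Set.mem_setOf_eq, Finset.coe_union, Set.mem_union, Finset.mem_coe]
  constructor
  · intro h
    rcases max_conv k i e hk h with ⟨rfl, h2⟩ | ⟨J, o, hJ1, hJ2, ho1, ho2, hi, h5, h6, h7⟩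
    · left
      rcases h2 with rfl | ⟨J, hJ1, hJ2, rfl⟩
      · exact Finset.mem_insert_self _ _
      · exact Finset.mem_insert_of_mem (Finset.mem_image.mpr
          ⟨J, Finset.mem_Icc.mpr ⟨hJ1, hJ2⟩, rfl⟩)
    · right
      rw [mem_S3]
      exact ⟨J, o, hJ1, hJ2, ho1, ho2, hi, h5, h6, by simpa using h7⟩
  · intro h
    rcases h with h | h
    · rw [S1] at h
      rcases Finset.mem_insert.mp h with h | h
      · rw [Prod.ext_iff] at h
        obtain ⟨h1, h2⟩ := h
        simp only at h1 h2
        subst h1; subst h2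
        exact max_S1b k hk
      · obtain ⟨J, hJ, hpe⟩ := Finset.mem_image.mp h
        rw [Finset.mem_Icc] at hJ
        rw [Prod.ext_iff] at hpe
        obtain ⟨h1, h2⟩ := hpe
        simp only at h1 h2
        subst h1; subst h2
        exact max_S1a k J hJ.1 hJ.2 hk
    · rw [mem_S3] at h
      obtain ⟨J, o, hJ1, hJ2, ho1, ho2, hi, h5, h6, h7⟩ := h
      have := max_S3 k J o e hJ1 hJ2 ho1 ho2 (by omega) h6 (by simpa [← hi] using h7)
      rw [← hi] at this
      exact this

lemma block_unique {J J' i : ℕ} (h1 : 1 ≤ J) (h1' : 1 ≤ J') (h2 : Nn (J - 1) < i)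
    (h3 : i ≤ Nn J) (h2' : Nn (J' - 1) < i) (h3' : i ≤ Nn J') : J = J' := by
  by_contra hne
  rcases Nat.lt_or_ge J J' with h | h
  · have := Nn_mono (show J ≤ J' - 1 by omega)
    omega
  · have := Nn_mono (show J' ≤ J - 1 by omega)
    omega

lemma card_S1 (k : ℕ) (hk : 1 ≤ k) : (S1 k).card = k := by
  rw [S1, Finset.card_insert_of_notMem, Finset.card_image_of_injOn]
  · rw [Nat.card_Icc]; omega
  · intro a ha b hb hab
    simp only [Finset.coe_Icc, Set.mem_Icc] at ha hb
    simp only [Prod.mk.injEq, true_and] at hab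
    by_contra hne
    rcases Nat.lt_or_ge a b with h | h
    · have h1 := Nn_lt (show a < b by omega)
      have h2 := Nn_mono (show a + 1 ≤ b by omega)
      have : Nn (a+1) = Nn a + (a+1)^2 := rfl
      have := sq_ge (a+1)
      omega
    · have h1 := Nn_lt (show b < a by omega)
      have h2 := Nn_mono (show b + 1 ≤ a by omega)
      have : Nn (b+1) = Nn b + (b+1)^2 := rfl
      have := sq_ge (b+1)
      omega
  · intro hmem
    obtain ⟨J, hJ, hpe⟩ := Finset.mem_image.mp hmem
    rw [Finset.mem_Icc] at hJ
    rw [Prod.ext_iff] at hpe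
    obtain ⟨-, hJN⟩ := hpe
    simp only at hJN
    have h2 := Nn_mono (show J + 1 ≤ k by omega)
    have h3 : Nn (J+1) = Nn J + (J+1)^2 := rfl
    have := sq_ge (J+1)
    omega

lemma card_S3 (k : ℕ) : (S3 k).card =
    ∑ J ∈ Finset.Icc 2 k, ∑ o ∈ Finset.Icc 1 (J ^ 2),
      (min (Nn k) (Nn (J - 1) + o + Bo J o - 1) + 1 - (Nn (J - 1) + o)) := by
  rw [S3, Finset.card_biUnion]
  · apply Finset.sum_congr rfl
    intro J hJ
    simp only [Finset.mem_Icc] at hJ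
    rw [Finset.card_biUnion]
    · apply Finset.sum_congr rfl
      intro o ho
      rw [Finset.card_image_of_injective _ (by intro a b hab; simpa using hab), Nat.card_Icc]
    · intro o ho o' ho' hne
      simp only [Finset.disjoint_left, Finset.mem_image, Finset.mem_Icc]
      rintro p ⟨e, he, rfl⟩ ⟨e', he', hpe⟩
      simp only [Prod.mk.injEq] at hpe
      omega
  · intro J hJ J' hJ' hne
    simp only [Finset.coe_Icc, Set.mem_Icc, Finset.mem_coe, Finset.mem_Icc] at hJ hJ'
    simp only [Finset.disjoint_left, Finset.mem_biUnion, Finset.mem_image, Finset.mem_Icc]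
    rintro p ⟨o, ⟨ho1, ho2⟩, e, he, rfl⟩ ⟨o', ⟨ho1', ho2'⟩, e', he', hpe⟩
    rw [Prod.ext_iff] at hpe
    obtain ⟨hpe1, hpe2⟩ := hpe
    simp only at hpe1 hpe2
    have hNJ : Nn J = Nn (J - 1) + J ^ 2 := Nn_eq J (by omega)
    have hNJ' : Nn J' = Nn (J' - 1) + J' ^ 2 := Nn_eq J' (by omega)
    exact hne (block_unique (i := Nn (J - 1) + o) (show 1 ≤ J by omega) (show 1 ≤ J' by omega)
      (by omega) (by omega) (by omega) (by omega))

lemma icc_split (M : ℕ) (h : 1 ≤ M) : Finset.Icc 1 M = insert 1 (Finset.Ioc 1 M) := by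
  ext x
  simp only [Finset.mem_Icc, Finset.mem_insert, Finset.mem_Ioc]
  omega

lemma sum_tail (M : ℕ) : ∀ c, c ≤ M →
    2 * ∑ o ∈ Finset.Ioc (M - c) M, (M + 1 - o) = c * (c + 1) := by
  intro c
  induction c with
  | zero => simp
  | succ c ih =>
    intro h
    have hsplit := Finset.sum_Ioc_consecutive (fun o => M + 1 - o)
      (show M - (c+1) ≤ M - c by omega) (show M - c ≤ M by omega)
    have hstep : Finset.Ioc (M - (c+1)) (M - c) = {M - c} := by
      have : M - (c+1) + 1 = M - c := by omega
      rw [← this, Nat.Ioc_succ_singleton, this]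
    rw [← hsplit, hstep, Finset.sum_singleton]
    have := ih (by omega)
    have hval : M + 1 - (M - c) = c + 1 := by omega
    rw [hval]
    ring_nf
    ring_nf at this
    omega

/-- inner sum for a non-final block -/
lemma inner_lt (k J : ℕ) (h2 : 2 ≤ J) (hJk : J < k) :
    ∑ o ∈ Finset.Icc 1 (J ^ 2),
      (min (Nn k) (Nn (J - 1) + o + Bo J o - 1) + 1 - (Nn (J - 1) + o)) =
    (J - 2) + (J ^ 2 - 1) * (J - 1) := by
  have hNJ : Nn J = Nn (J - 1) + J ^ 2 := Nn_eq J (by omega)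
  have hNk : Nn (J + 1) ≤ Nn k := Nn_mono (by omega)
  have hN1 : Nn (J + 1) = Nn J + (J + 1) ^ 2 := rfl
  have hsq1 : J + 1 ≤ (J + 1) ^ 2 := sq_ge (J + 1)
  have hsq : J ≤ J ^ 2 := sq_ge J
  have hstep : ∀ o ∈ Finset.Icc 1 (J ^ 2),
      (min (Nn k) (Nn (J - 1) + o + Bo J o - 1) + 1 - (Nn (J - 1) + o)) = Bo J o := by
    intro o ho
    rw [Finset.mem_Icc] at ho
    have hBoJ : Bo J o ≤ J - 1 := by unfold Bo; split <;> omega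
    omega
  rw [Finset.sum_congr rfl hstep, icc_split _ (by omega), Finset.sum_insert (by simp)]
  have hBo1 : Bo J 1 = J - 2 := by unfold Bo; simp
  have hconst : ∀ o ∈ Finset.Ioc 1 (J ^ 2), Bo J o = J - 1 := by
    intro o ho
    rw [Finset.mem_Ioc] at ho
    unfold Bo
    split <;> omega
  rw [hBo1, Finset.sum_congr rfl hconst, Finset.sum_const, Nat.card_Ioc, smul_eq_mul]

/-- inner sum for the final block (doubled to avoid division) -/
lemma inner_eq (k : ℕ) (h2 : 2 ≤ k) :
    2 * ∑ o ∈ Finset.Icc 1 (k ^ 2),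
      (min (Nn k) (Nn (k - 1) + o + Bo k o - 1) + 1 - (Nn (k - 1) + o)) =
    2 * (k - 2) + 2 * ((k ^ 2 - k + 1) * (k - 1)) + (k - 2) * (k - 1) := by
  have hNJ : Nn k = Nn (k - 1) + k ^ 2 := Nn_eq k (by omega)
  have hsq : k ≤ k ^ 2 := sq_ge k
  have hkk : k + 2 ≤ k ^ 2 + 1 := by nlinarith
  set c := k ^ 2 - (k - 2) with hc
  rw [icc_split _ (by omega), Finset.sum_insert (by simp)]
  have hsplit := Finset.sum_Ioc_consecutive
    (fun o => min (Nn k) (Nn (k - 1) + o + Bo k o - 1) + 1 - (Nn (k - 1) + o))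
    (show 1 ≤ c by omega) (show c ≤ k ^ 2 by omega)
  rw [← hsplit]
  have ht1 : min (Nn k) (Nn (k - 1) + 1 + Bo k 1 - 1) + 1 - (Nn (k - 1) + 1) = k - 2 := by
    have : Bo k 1 = k - 2 := by unfold Bo; simp
    omega
  have e1 : ∑ o ∈ Finset.Ioc 1 c,
      (min (Nn k) (Nn (k - 1) + o + Bo k o - 1) + 1 - (Nn (k - 1) + o))
      = (k ^ 2 - k + 1) * (k - 1) := by
    have hmid : ∀ o ∈ Finset.Ioc 1 c,
        min (Nn k) (Nn (k - 1) + o + Bo k o - 1) + 1 - (Nn (k - 1) + o) = k - 1 := by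
      intro o ho
      rw [Finset.mem_Ioc] at ho
      have : Bo k o = k - 1 := by unfold Bo; split <;> omega
      omega
    rw [Finset.sum_congr rfl hmid, Finset.sum_const, Nat.card_Ioc, smul_eq_mul]
    have : c - 1 = k ^ 2 - k + 1 := by omega
    rw [this]
  have e2 : ∑ o ∈ Finset.Ioc c (k ^ 2),
      (min (Nn k) (Nn (k - 1) + o + Bo k o - 1) + 1 - (Nn (k - 1) + o))
      = ∑ o ∈ Finset.Ioc c (k ^ 2), (k ^ 2 + 1 - o) := by
    apply Finset.sum_congr rfl
    intro o ho
    rw [Finset.mem_Ioc] at ho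
    have : Bo k o = k - 1 := by unfold Bo; split <;> omega
    omega
  have e3 : 2 * ∑ o ∈ Finset.Ioc c (k ^ 2), (k ^ 2 + 1 - o) = (k - 2) * (k - 1) := by
    rw [hc]
    have h := sum_tail (k ^ 2) (k - 2) (by omega)
    rw [h, show k - 2 + 1 = k - 1 by omega]
  rw [ht1, e1, e2]
  omega

def Ak (k : ℕ) : ℕ := ∑ J ∈ Finset.Icc 2 k, (2 * (J - 2) + 2 * ((J ^ 2 - 1) * (J - 1)))

lemma Ak_closed : ∀ k, 1 ≤ k → 6 * Ak k + 3 * k ^ 2 + 14 * k = 3 * k ^ 4 + 2 * k ^ 3 + 12 := by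
  intro k
  induction k with
  | zero => omega
  | succ k ih =>
    intro _
    rcases Nat.eq_zero_or_pos k with rfl | hk
    · simp [Ak]
    · have step : Ak (k + 1) = Ak k + (2 * ((k+1) - 2) + 2 * (((k+1) ^ 2 - 1) * ((k+1) - 1))) := by
        rw [Ak, Finset.sum_Icc_succ_top (by omega)]
        rfl
      have ihv := ih hk
      have h1 : 1 ≤ (k+1)^2 := Nat.one_le_pow _ _ (by omega)
      zify [show 2 ≤ k + 1 by omega, show 1 ≤ k + 1 by omega, h1, hk] at step ihv ⊢
      rw [step]
      linear_combination ihv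

lemma card_combine (k : ℕ) (h2 : 2 ≤ k) :
    2 * (S3 k).card + (k - 1) * (k - 2) = Ak k := by
  obtain ⟨m, rfl⟩ : ∃ m, k = m + 2 := ⟨k - 2, by omega⟩
  rw [card_S3, Finset.mul_sum, Ak, Finset.sum_Icc_succ_top (show 2 ≤ m + 2 by omega),
    Finset.sum_Icc_succ_top (show 2 ≤ m + 2 by omega)]
  have hmain : ∀ J ∈ Finset.Icc 2 (m + 1),
      2 * ∑ o ∈ Finset.Icc 1 (J ^ 2),
        (min (Nn (m + 2)) (Nn (J - 1) + o + Bo J o - 1) + 1 - (Nn (J - 1) + o)) =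
      2 * (J - 2) + 2 * ((J ^ 2 - 1) * (J - 1)) := by
    intro J hJ
    rw [Finset.mem_Icc] at hJ
    rw [inner_lt (m + 2) J hJ.1 (by omega)]
    ring
  rw [Finset.sum_congr rfl hmain]
  simp only [show m + 1 + 1 = m + 2 from rfl]
  have hfin := inner_eq (m + 2) (by omega)
  have halg : 2 * (m + 2 - 2) + 2 * (((m + 2) ^ 2 - (m + 2) + 1) * (m + 2 - 1)) +
      (m + 2 - 2) * (m + 2 - 1) + (m + 2 - 1) * (m + 2 - 2) =
      2 * (m + 2 - 2) + 2 * (((m + 2) ^ 2 - 1) * (m + 2 - 1)) := by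
    have h1 : 1 ≤ (m + 2) ^ 2 := Nat.one_le_pow _ _ (by omega)
    have h2 : m + 2 ≤ (m + 2) ^ 2 := sq_ge (m + 2)
    zify [h1, h2, show 2 ≤ m + 2 by omega, show 1 ≤ m + 2 by omega]
    ring
  omega

/-- For every `k ≥ 1`, the number of maximal locations of `w_k` is
`|L| = k(3k³ + 2k² − 9k + 16)/12`. -/
theorem card_maxLocs_w (k : ℕ) (hk : 1 ≤ k) :
    {p : ℕ × ℕ | IsMaxLoc (wSeq k) (w k).length p.1 p.2}.ncard =
      k * (3 * k ^ 3 + 2 * k ^ 2 + 16 - 9 * k) / 12 := by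

  have hlen : (w k).length = Nn k := w_length k
  simp only [hlen]
  rw [setEq k hk, Set.ncard_coe_finset]
  have hdisj : Disjoint (S1 k) (S3 k) := by
    simp only [Finset.disjoint_left]
    intro p hp1 hp3
    rw [mem_S3] at hp3
    obtain ⟨J, o, hJ1, hJ2, ho1, ho2, hfst, -⟩ := hp3
    have h1 : p.1 = 1 := by
      rw [S1] at hp1
      rcases Finset.mem_insert.mp hp1 with h | h
      · rw [h]
      · obtain ⟨J', -, hpe⟩ := Finset.mem_image.mp h
        rw [← hpe]
    have hN1 : 1 ≤ Nn (J - 1) := by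
      have := Nn_mono (show 1 ≤ J - 1 by omega)
      simp only [Nn] at this
      omega
    omega
  rw [Finset.card_union_of_disjoint hdisj, card_S1 k hk]
  rcases Nat.lt_or_ge k 2 with hk2 | hk2
  · have hk1 : k = 1 := by omega
    subst hk1
    have hS3 : S3 1 = ∅ := by
      rw [S3, show Finset.Icc 2 1 = ∅ from Finset.Icc_eq_empty (by omega)]
      rfl
    rw [hS3]
    norm_num
  · have hC := card_combine k hk2
    have hA := Ak_closed k (by omega)
    set c := (S3 k).card with hc
    have h9 : 9 * k ≤ 3 * k ^ 3 + 2 * k ^ 2 + 16 := by nlinarith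
    have key : k * (3 * k ^ 3 + 2 * k ^ 2 + 16 - 9 * k) = 12 * (k + c) := by
      zify [h9, show 1 ≤ k by omega, show 2 ≤ k by omega] at hC hA ⊢
      linear_combination (-6 : ℤ) * hC - hA
    omega
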